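/- If a group G has BVC, then the abelianization H₁(G, ℤ) = G/[G,G] is finitely generated of rank at most one. -/

import Mathlib

def IsVirtuallyCyclic (G : Type*) [Group G] : Prop :=
  ∃ H : Subgroup G, IsCyclic H ∧ H.FiniteIndex

def HasBVC (G : Type*) [Group G] : Prop :=
  ∃ S : Finset (Subgroup G), (∀ V ∈ S, IsVirtuallyCyclic V) ∧
    ∀ W : Subgroup G, IsVirtuallyCyclic W →
      ∃ V ∈ S, ∃ g : G, W.map (MulAut.conj g).toMonoidHom ≤ V

section Aux

variable {K : Type*} [Group K]

theorem myFG_of_isCyclic (K : Type*) [Group K] [IsCyclic K] : Group.FG K := by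
  obtain ⟨g, hg⟩ := IsCyclic.exists_generator (α := K)
  rw [Group.fg_iff]
  refine ⟨{g}, ?_, Set.finite_singleton g⟩
  rw [eq_top_iff]
  intro x _
  obtain ⟨k, hk⟩ := Subgroup.mem_zpowers_iff.mp (hg x)
  rw [← hk]
  exact Subgroup.zpow_mem _ (Subgroup.subset_closure (Set.mem_singleton g)) k

theorem myFG_of_finiteIndex (H : Subgroup K) [H.FiniteIndex]
    (hH : Group.FG H) : Group.FG K := by
  haveI : Finite (K ⧸ H) := Subgroup.finite_quotient_of_finiteIndex
  rw [Group.fg_iff] at hH ⊢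
  obtain ⟨s, hs, hsfin⟩ := hH
  refine ⟨(H.subtype '' s) ∪ Set.range (Quotient.out : K ⧸ H → K), ?_,
    (hsfin.image _).union (Set.finite_range _)⟩
  rw [eq_top_iff]
  intro g _
  have h1 : QuotientGroup.mk (s := H) ((QuotientGroup.mk g : K ⧸ H).out) = QuotientGroup.mk g :=
    Quotient.out_eq _
  have h2 : ((QuotientGroup.mk g : K ⧸ H).out)⁻¹ * g ∈ H := QuotientGroup.eq.mp h1
  have hHle : H ≤ Subgroup.closure ((H.subtype '' s) ∪ Set.range (Quotient.out : K ⧸ H → K)) := by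
    have heq : H = Subgroup.closure (H.subtype '' s) := by
      rw [← MonoidHom.map_closure, hs, ← MonoidHom.range_eq_map, Subgroup.range_subtype]
    exact heq.le.trans (Subgroup.closure_mono Set.subset_union_left)
  have h3 : (QuotientGroup.mk g : K ⧸ H).out ∈
      Subgroup.closure ((H.subtype '' s) ∪ Set.range (Quotient.out : K ⧸ H → K)) :=
    Subgroup.subset_closure (Or.inr ⟨_, rfl⟩)
  have := mul_mem h3 (hHle h2)
  simpa [mul_assoc] using this

theorem myFG_bot : (⊥ : Subgroup K).FG :=
  ⟨∅, by simp⟩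

theorem myFG_sup {H1 H2 : Subgroup K} (h1 : H1.FG) (h2 : H2.FG) : (H1 ⊔ H2).FG := by
  classical
  obtain ⟨s1, hs1⟩ := h1
  obtain ⟨s2, hs2⟩ := h2
  exact ⟨s1 ∪ s2, by rw [Finset.coe_union, Subgroup.closure_union, hs1, hs2]⟩

theorem myFG_map {K' : Type*} [Group K'] {P : Subgroup K} (h : P.FG) (f : K →* K') :
    (P.map f).FG := by
  classical
  obtain ⟨s, hs⟩ := h
  exact ⟨s.image f, by rw [Finset.coe_image, ← MonoidHom.map_closure, hs]⟩

theorem myCyclic_zpowers (x : K) : IsCyclic ↥(Subgroup.zpowers x) := by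
  refine ⟨⟨⟨x, Subgroup.mem_zpowers x⟩, fun y => ?_⟩⟩
  obtain ⟨k, hk⟩ := Subgroup.mem_zpowers_iff.mp y.2
  refine Subgroup.mem_zpowers_iff.mpr ⟨k, Subtype.ext ?_⟩
  rw [SubgroupClass.coe_zpow]
  exact hk

theorem myVC_zpowers (x : K) : IsVirtuallyCyclic ↥(Subgroup.zpowers x) := by
  haveI := myCyclic_zpowers x
  exact ⟨⊤, inferInstance, inferInstance⟩

theorem myExists_pow_mem (H : Subgroup K) [H.FiniteIndex] (v : K) :
    ∃ n : ℕ, 0 < n ∧ v ^ n ∈ H := by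
  refine ⟨H.normalCore.index, Nat.pos_of_ne_zero Subgroup.FiniteIndex.index_ne_zero,
    H.normalCore_le ?_⟩
  exact H.normalCore.pow_index_mem v

end Aux

/-- The abelianization is finitely generated of rank at most one: it is finitely
generated and becomes cyclic after quotienting out torsion, i.e. there is an element
`g` such that every element agrees with a power of `g` up to a torsion element. -/
theorem stmt_11 {G : Type*} [Group G] (hG : HasBVC G) :
    Group.FG (Abelianization G) ∧
      ∃ g : Abelianization G, ∀ x : Abelianization G,
        ∃ k : ℤ, IsOfFinOrder (x * (g ^ k)⁻¹) := by
  classical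
  obtain ⟨S, hSvc, hScov⟩ := hG
  set A := Abelianization G with hA
  -- key data for each member of S
  have key : ∀ V : {V : Subgroup G // V ∈ S}, ∃ c : A,
      (Subgroup.map Abelianization.of (V : Subgroup G)).FG ∧
      ∀ x ∈ Subgroup.map Abelianization.of (V : Subgroup G),
        ∃ n : ℤ, 0 < n ∧ ∃ k : ℤ, x ^ n = c ^ k := by
    rintro ⟨V, hV⟩
    obtain ⟨H, hHcyc, hHfi⟩ := hSvc V hV
    haveI := hHcyc
    haveI := hHfi
    obtain ⟨h, hh⟩ := IsCyclic.exists_generator (α := H)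
    refine ⟨Abelianization.of (((h : V) : G)), ?_, ?_⟩
    · have hfgV : Group.FG V := myFG_of_finiteIndex H (myFG_of_isCyclic H)
      exact myFG_map ((Group.fg_iff_subgroup_fg V).mp hfgV) Abelianization.of
    · rintro x hx
      rw [Subgroup.mem_map] at hx
      obtain ⟨v, hv, rfl⟩ := hx
      obtain ⟨n, hn, hmem⟩ := myExists_pow_mem H (⟨v, hv⟩ : V)
      set w : H := ⟨(⟨v, hv⟩ : V) ^ n, hmem⟩ with hw
      obtain ⟨k, hk⟩ := Subgroup.mem_zpowers_iff.mp (hh w)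
      have hvn : (⟨v, hv⟩ : V) ^ n = ((h : V)) ^ k := by
        have h1 := congrArg (Subtype.val) hk
        rw [SubgroupClass.coe_zpow] at h1
        exact h1.symm
      have hvnG : v ^ n = (((h : V) : G)) ^ k := by
        have h2 := congrArg (Subtype.val) hvn
        rwa [SubgroupClass.coe_pow, SubgroupClass.coe_zpow] at h2
      refine ⟨(n : ℤ), by exact_mod_cast hn, k, ?_⟩
      rw [zpow_natCast, ← map_pow, hvnG, map_zpow]
  choose c hcfg hcrel using key
  -- every element of the abelianization lies in the image of some V ∈ S
  have coverA : ∀ x : A, ∃ Vs : {V : Subgroup G // V ∈ S},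
      x ∈ Subgroup.map Abelianization.of (Vs : Subgroup G) := by
    intro x
    obtain ⟨x0, rfl⟩ : ∃ x0, Abelianization.of x0 = x := Quotient.exists_rep x
    obtain ⟨V, hV, g, hle⟩ := hScov (Subgroup.zpowers x0) (myVC_zpowers x0)
    have hmem : g * x0 * g⁻¹ ∈ V := by
      apply hle
      exact Subgroup.mem_map.mpr ⟨x0, Subgroup.mem_zpowers x0, rfl⟩
    refine ⟨⟨V, hV⟩, Subgroup.mem_map.mpr ⟨g * x0 * g⁻¹, hmem, ?_⟩⟩
    rw [map_mul, map_mul, map_inv, mul_comm (Abelianization.of g) (Abelianization.of x0),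
      mul_inv_cancel_right]
  -- finite generation
  have hfgA : Group.FG A := by
    rw [Group.fg_def]
    have htop : S.attach.sup (fun Vs => Subgroup.map Abelianization.of (Vs : Subgroup G)) =
        (⊤ : Subgroup A) := by
      rw [eq_top_iff]
      intro a _
      obtain ⟨Vs, hVs⟩ := coverA a
      have hle := Finset.le_sup (s := S.attach)
        (f := fun Vs : {V : Subgroup G // V ∈ S} => Subgroup.map Abelianization.of (Vs : Subgroup G))
        (Finset.mem_attach S Vs)
      exact hle hVs
    rw [← htop]
    exact Finset.sup_induction myFG_bot (fun _ h1 _ h2 => myFG_sup h1 h2) fun Vs _ => hcfg Vs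
  -- pass to the quotient by the torsion subgroup
  set T : Subgroup A := CommGroup.torsion A with hT
  set Q := A ⧸ T with hQ
  have coverQ : ∀ z : Q, ∃ Vs : {V : Subgroup G // V ∈ S},
      ∃ n : ℤ, 0 < n ∧ ∃ k : ℤ, z ^ n = (QuotientGroup.mk (c Vs) : Q) ^ k := by
    intro z
    obtain ⟨a, rfl⟩ := QuotientGroup.mk_surjective z
    obtain ⟨Vs, ha⟩ := coverA a
    obtain ⟨n, hn, k, hk⟩ := hcrel Vs a ha
    exact ⟨Vs, n, hn, k, by rw [← QuotientGroup.mk_zpow, hk, QuotientGroup.mk_zpow]⟩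
  -- any two elements of Q are dependent
  have hdep : ∀ x y : Q, ∃ a b : ℤ, ¬(a = 0 ∧ b = 0) ∧ x ^ a = y ^ b := by
    intro x y
    choose f n hn k hk using fun j : ℕ => coverQ (x * y ^ (j : ℤ))
    obtain ⟨j, hj, j', hj', hne, heq⟩ :=
      Finset.exists_ne_map_eq_of_card_lt_of_maps_to (s := Finset.range (S.attach.card + 1))
        (t := S.attach) (by simp) (fun a _ => Finset.mem_attach S (f a))
    -- a single relation between x * y^j and x * y^j'
    have hrel : ∃ a b : ℤ, ¬(a = 0 ∧ b = 0) ∧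
        (x * y ^ (j : ℤ)) ^ a = (x * y ^ (j' : ℤ)) ^ b := by
      rcases eq_or_ne (k j') 0 with hk0 | hk0
      · refine ⟨0, n j', fun hcon => by have := hn j'; omega, ?_⟩
        rw [hk j', hk0, zpow_zero, zpow_zero]
      · refine ⟨n j * k j', n j' * k j, fun hcon => ?_, ?_⟩
        · have h1 := hn j
          rcases mul_eq_zero.mp hcon.1 with h | h
          · omega
          · exact hk0 h
        · rw [zpow_mul, zpow_mul, hk j, hk j', heq, ← zpow_mul, ← zpow_mul, mul_comm]
    obtain ⟨a, b, hab, hab2⟩ := hrel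
    refine ⟨a - b, (j' : ℤ) * b - (j : ℤ) * a, fun hcon => ?_, ?_⟩
    · have hA : a = b := by omega
      have hB : ((j' : ℤ) - (j : ℤ)) * b = 0 := by
        have := hcon.2
        rw [hA] at this
        linear_combination this
      rcases mul_eq_zero.mp hB with h | h
      · have : (j : ℤ) = (j' : ℤ) := by omega
        exact hne (by exact_mod_cast this)
      · exact hab ⟨by omega, h⟩
    · have h1 := congrArg Additive.ofMul hab2
      rw [ofMul_zpow, ofMul_zpow, ofMul_mul, ofMul_mul, ofMul_zpow, ofMul_zpow] at h1
      apply Additive.ofMul.injective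
      rw [ofMul_zpow, ofMul_zpow]
      linear_combination (norm := module) h1
  -- module structure on the additive version of Q
  haveI hfgQ : Group.FG Q := by
    haveI := hfgA
    exact Group.fg_of_surjective (f := QuotientGroup.mk' T) (QuotientGroup.mk'_surjective T)
  haveI : Module.Finite ℤ (Additive Q) := Module.Finite.iff_addGroup_fg.mpr inferInstance
  have htfQ : IsMulTorsionFree Q := QuotientGroup.instIsMulTorsionFree A
  have htfQa : IsAddTorsionFree (Additive Q) := inferInstance
  haveI : NoZeroSMulDivisors ℤ (Additive Q) := IsAddTorsionFree.to_noZeroSMulDivisors_int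
  haveI : Module.Free ℤ (Additive Q) := Module.free_of_finite_type_torsion_free'
  set ι := Module.Free.ChooseBasisIndex ℤ (Additive Q) with hι
  set b := Module.Free.chooseBasis ℤ (Additive Q) with hb
  -- the basis has at most one element
  haveI hsub : Subsingleton ι := by
    refine ⟨fun i j => ?_⟩
    by_contra hij
    obtain ⟨a, a', hab, hab2⟩ := hdep (Additive.toMul (b i)) (Additive.toMul (b j))
    have h1 := congrArg Additive.ofMul hab2
    rw [ofMul_zpow, ofMul_zpow, ofMul_toMul, ofMul_toMul] at h1
    have h2 := congrArg (fun z => b.repr z) h1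
    simp only [map_zsmul, Module.Basis.repr_self] at h2
    have h3 := DFunLike.congr_fun h2 i
    have h4 := DFunLike.congr_fun h2 j
    simp [Finsupp.single_apply, hij, Ne.symm hij] at h3 h4
    exact hab ⟨h3, h4.symm⟩
  -- Q is cyclic
  have hcyc : ∃ gQ : Q, ∀ z : Q, ∃ m : ℤ, z = gQ ^ m := by
    by_cases hne : Nonempty ι
    · obtain ⟨i0⟩ := hne
      haveI : Unique ι := ⟨⟨i0⟩, fun j => Subsingleton.elim j i0⟩
      refine ⟨Additive.toMul (b default), fun z => ⟨b.repr (Additive.ofMul z) default, ?_⟩⟩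
      have h := b.sum_repr (Additive.ofMul z)
      rw [Fintype.sum_unique] at h
      calc z = Additive.toMul (Additive.ofMul z) := rfl
        _ = Additive.toMul ((b.repr (Additive.ofMul z) default) • b default) := by rw [h]
        _ = Additive.toMul (b default) ^ (b.repr (Additive.ofMul z) default) := by
              rw [toMul_zsmul]
    · haveI : IsEmpty ι := not_nonempty_iff.mp hne
      refine ⟨1, fun z => ⟨0, ?_⟩⟩
      have h := b.sum_repr (Additive.ofMul z)
      rw [Finset.univ_eq_empty, Finset.sum_empty] at h
      rw [zpow_zero]
      calc z = Additive.toMul (Additive.ofMul z) := rfl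
        _ = Additive.toMul (0 : Additive Q) := by rw [← h]
        _ = 1 := toMul_zero
  obtain ⟨gQ, hgQ⟩ := hcyc
  obtain ⟨g, hg⟩ := QuotientGroup.mk_surjective gQ
  refine ⟨hfgA, g, fun x => ?_⟩
  obtain ⟨m, hm⟩ := hgQ (QuotientGroup.mk x)
  refine ⟨m, ?_⟩
  rw [← CommGroup.mem_torsion, ← QuotientGroup.eq_one_iff (N := T)]
  rw [QuotientGroup.mk_mul, QuotientGroup.mk_inv, QuotientGroup.mk_zpow, hg, ← hm,
    mul_inv_cancel]
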